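/- Let f be a piecewise contracting interval map on X satisfying the separation property and D ⊂ X̃. Then the topological entropy of f restricted to Λ ∩ X̃, defined by Bowen's formula h_top(f|(Λ∩X̃)) = lim_{ε→0} limsup_{n→∞} (log r_n(ε, Λ∩X̃))/n, where r_n(ε, Λ∩X̃) is the smallest cardinality of an (n,ε)-spanning set for Λ ∩ X̃ with respect to f, is equal to zero. -/

import Mathlib

open Set Filter Metric Topology

/-- A piecewise contracting interval map (PCIM) on the compact interval `X = [a,b]`:
there are `N ≥ 1` pairwise disjoint nonempty open (relative to `X`) subintervals
whose closures cover `X`, and `f` contracts with rate `lam ∈ (0,1)` on each piece. -/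
structure PCIM where
  a : ℝ
  b : ℝ
  hab : a < b
  N : ℕ
  hN : 1 ≤ N
  f : ℝ → ℝ
  lam : ℝ
  hlam₀ : 0 < lam
  hlam₁ : lam < 1
  piece : Fin N → Set ℝ
  piece_nonempty : ∀ i, (piece i).Nonempty
  piece_interval : ∀ i, ∃ c d : ℝ, piece i = Set.Ioo c d ∩ Set.Icc a b
  piece_disjoint : ∀ i j, i ≠ j → Disjoint (piece i) (piece j)
  cover : Set.Icc a b = ⋃ i, closure (piece i)
  mapsTo : Set.MapsTo f (Set.Icc a b) (Set.Icc a b)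
  contract : ∀ i, ∀ x ∈ piece i, ∀ y ∈ piece i, |f x - f y| ≤ lam * |x - y|

namespace PCIM

variable (P : PCIM)

/-- The underlying compact interval `X`. -/
def X : Set ℝ := Set.Icc P.a P.b

/-- `X* = ⋃ i, X_i`, the union of the contraction pieces. -/
def Xstar : Set ℝ := ⋃ i, P.piece i

/-- `Δ = X \ X*`, the set of boundaries of the contraction pieces. -/
def Delta : Set ℝ := P.X \ P.Xstar

/-- `X̃ = ⋂_{j ≥ 0} f⁻ʲ(X*)`, the points all of whose iterates are well defined. -/
def Xtilde : Set ℝ := ⋂ j : ℕ, (P.f^[j]) ⁻¹' P.Xstar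

/-- `D`: the set of one-sided limits of `f` at the points of `Δ`. -/
def D : Set ℝ :=
  {L | ∃ c ∈ P.Delta,
    ((𝓝[P.X ∩ Set.Iio c] c).NeBot ∧ Filter.Tendsto P.f (𝓝[P.X ∩ Set.Iio c] c) (𝓝 L)) ∨
    ((𝓝[P.X ∩ Set.Ioi c] c).NeBot ∧ Filter.Tendsto P.f (𝓝[P.X ∩ Set.Ioi c] c) (𝓝 L))}

/-- A set `A` is `f`-pseudo-invariant if for every `x ∈ A` at least one of the
one-sided limits of `f` at `x` belongs to `A`. -/
def PseudoInvariant (A : Set ℝ) : Prop :=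
  ∀ x ∈ A,
    (∃ L ∈ A, (𝓝[P.X ∩ Set.Iio x] x).NeBot ∧
      Filter.Tendsto P.f (𝓝[P.X ∩ Set.Iio x] x) (𝓝 L)) ∨
    (∃ L ∈ A, (𝓝[P.X ∩ Set.Ioi x] x).NeBot ∧
      Filter.Tendsto P.f (𝓝[P.X ∩ Set.Ioi x] x) (𝓝 L))

/-- `f` is piecewise monotonic: strictly monotone on each contraction piece. -/
def PiecewiseMonotonic : Prop :=
  ∀ i, StrictMonoOn P.f (P.piece i) ∨ StrictAntiOn P.f (P.piece i)

/-- `f` satisfies the separation property: it is piecewise monotonic and the closures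
of the images of distinct pieces are disjoint. -/
def SeparationProperty : Prop :=
  P.PiecewiseMonotonic ∧
    ∀ i j, i ≠ j → closure (P.f '' P.piece i) ∩ closure (P.f '' P.piece j) = ∅

/-- The iterates `Λ_n` defining the attractor: `Λ_0 = X`,
`Λ_{n+1} = cl (f (Λ_n \ Δ))`. -/
def LambdaIter : (P : PCIM) → ℕ → Set ℝ
  | Q, 0 => Q.X
  | Q, n + 1 => closure (Q.f '' (LambdaIter Q n \ Q.Delta))

/-- The attractor `Λ = ⋂_{n ≥ 1} Λ_n`. -/
def Lambda : Set ℝ := ⋂ n : ℕ, P.LambdaIter (n + 1)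

/-- The atom associated to the word `w = [i₁, …, iₙ]`:
`A_{i₁…iₙ} = F_{iₙ} ∘ ⋯ ∘ F_{i₁}(X)` where `F_i(A) = cl (f (A ∩ X_i))`. -/
def atomOf (w : List (Fin P.N)) : Set ℝ :=
  w.foldl (fun A i => closure (P.f '' (A ∩ P.piece i))) P.X

/-- `𝒜_n`: the set of (nonempty) atoms of generation `n`. -/
def atoms (n : ℕ) : Set (Set ℝ) :=
  {A | ∃ w : List (Fin P.N), w.length = n ∧ P.atomOf w = A ∧ A.Nonempty}

/-- `θ` is the itinerary of `x`: `f^t(x) ∈ X_{θ_t}` for all `t`. -/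
def IsItinerary (x : ℝ) (θ : ℕ → Fin P.N) : Prop :=
  ∀ t : ℕ, P.f^[t] x ∈ P.piece (θ t)

/-- The word `θ_t θ_{t+1} … θ_{t+n-1}` of length `n` of the sequence `θ`. -/
def word (θ : ℕ → Fin P.N) (t n : ℕ) : List (Fin P.N) :=
  (List.range n).map fun k => θ (t + k)

/-- `L_n(θ)`: the set of words of length `n` occurring in `θ`. -/
def lang (θ : ℕ → Fin P.N) (n : ℕ) : Set (List (Fin P.N)) :=
  {w | ∃ t : ℕ, w = P.word θ t n}

/-- The complexity function `p_θ(n) = #L_n(θ)`. -/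
noncomputable def complexity (θ : ℕ → Fin P.N) (n : ℕ) : ℕ := (P.lang θ n).ncard

/-- The forward orbit of `x` under `f`. -/
def orbit (x : ℝ) : Set ℝ := {y | ∃ k : ℕ, P.f^[k] x = y}

/-- The ω-limit set of `x` under `f`. -/
def omegaLimitSet (x : ℝ) : Set ℝ :=
  ⋂ n : ℕ, closure {y | ∃ m : ℕ, n ≤ m ∧ P.f^[m] x = y}

/-- A compact pseudo-invariant set `A` is `X̃`-minimal if the orbit of every point
of `A ∩ X̃` is dense in `A`. -/
def XtildeMinimal (A : Set ℝ) : Prop :=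
  IsCompact A ∧ P.PseudoInvariant A ∧ ∀ x ∈ A ∩ P.Xtilde, A ⊆ closure (P.orbit x)

/-- A periodic orbit contained in `X̃`. -/
def IsPeriodicOrbit (A : Set ℝ) : Prop :=
  ∃ x ∈ P.Xtilde, ∃ p : ℕ, 1 ≤ p ∧ P.f^[p] x = x ∧ A = P.orbit x

end PCIM

/-- A Cantor set: nonempty, compact, perfect and totally disconnected. -/
def IsCantorSet (A : Set ℝ) : Prop :=
  A.Nonempty ∧ IsCompact A ∧ Perfect A ∧ IsTotallyDisconnected A


/-- `r_n(ε, Λ ∩ X̃)`: the smallest cardinality of an `(n,ε)`-spanning set for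
`Λ ∩ X̃` with respect to `f`. -/
noncomputable def PCIM.spanningCard (P : PCIM) (n : ℕ) (ε : ℝ) : ℕ :=
  sInf {k : ℕ | ∃ E : Finset ℝ, E.card = k ∧ ↑E ⊆ P.Lambda ∩ P.Xtilde ∧
    ∀ x ∈ P.Lambda ∩ P.Xtilde, ∃ y ∈ E,
      ∀ j < n, |P.f^[j] x - P.f^[j] y| < ε}

/- ============ Auxiliary development for the entropy theorem ============ -/

noncomputable section EntropyAux

open scoped Classical

/-- The open convex hull of a set of reals. -/
def openHull (A : Set ℝ) : Set ℝ := {z | (∃ x ∈ A, x < z) ∧ ∃ y ∈ A, z < y}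

lemma openHull_mono {A B : Set ℝ} (h : A ⊆ B) : openHull A ⊆ openHull B := by
  rintro z ⟨⟨x, hx, hxz⟩, ⟨y, hy, hzy⟩⟩
  exact ⟨⟨x, h hx, hxz⟩, ⟨y, h hy, hzy⟩⟩

lemma openHull_subset_of_ordConnected {A C : Set ℝ} (hAC : A ⊆ C) (hC : C.OrdConnected) :
    openHull A ⊆ C := by
  rintro z ⟨⟨x, hx, hxz⟩, ⟨y, hy, hzy⟩⟩
  exact hC.out (hAC hx) (hAC hy) ⟨hxz.le, hzy.le⟩

/-- A finite set of reals, any two of which are separated by a point of `Δ''`,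
has at most `1 +` (number of points of `Δ''` in its open hull) elements. -/
lemma card_le_one_add_gaps (Δ'' : Finset ℝ) :
    ∀ (k : ℕ) (T₀ : Finset ℝ), T₀.card ≤ k →
    (∀ u ∈ T₀, ∀ v ∈ T₀, u < v → ∃ δ ∈ Δ'', u < δ ∧ δ < v) →
    T₀.card ≤ 1 + (Δ''.filter (fun δ => δ ∈ openHull (T₀ : Set ℝ))).card := by
  intro k
  induction k with
  | zero => intro T₀ hc _; omega
  | succ k ih =>
    intro T₀ hc h
    by_cases h1 : T₀.card ≤ 1
    · omega
    · have hne : T₀.Nonempty := Finset.card_pos.mp (by omega)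
      have hMmem : T₀.max' hne ∈ T₀ := T₀.max'_mem hne
      set M := T₀.max' hne with hM
      set T' := T₀.erase M with hT'
      have hcard' : T'.card = T₀.card - 1 := Finset.card_erase_of_mem hMmem
      have hne' : T'.Nonempty := Finset.card_pos.mp (by omega)
      have hM'T' : T'.max' hne' ∈ T' := T'.max'_mem hne'
      set M' := T'.max' hne' with hM'
      have hM'T₀ : M' ∈ T₀ := Finset.mem_of_mem_erase hM'T'
      have hM'M : M' < M := lt_of_le_of_ne (T₀.le_max' _ hM'T₀) (Finset.ne_of_mem_erase hM'T')
      obtain ⟨δ, hδΔ, hδ1, hδ2⟩ := h M' hM'T₀ M hMmem hM'M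
      have hsub : T' ⊆ T₀ := Finset.erase_subset _ _
      have ihT' := ih T' (by omega) (fun u hu v hv huv => h u (hsub hu) v (hsub hv) huv)
      have hδhull : δ ∈ openHull (T₀ : Set ℝ) :=
        ⟨⟨M', Finset.mem_coe.mpr hM'T₀, hδ1⟩, ⟨M, Finset.mem_coe.mpr hMmem, hδ2⟩⟩
      have hδnotmem : δ ∉ Δ''.filter (fun x => x ∈ openHull (T' : Set ℝ)) := by
        intro hmem
        obtain ⟨y, hy, hδy⟩ := (Finset.mem_filter.mp hmem).2.2
        have : y ≤ M' := T'.le_max' y (Finset.mem_coe.mp hy)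
        linarith
      have hins : insert δ (Δ''.filter (fun x => x ∈ openHull (T' : Set ℝ)))
          ⊆ Δ''.filter (fun x => x ∈ openHull (T₀ : Set ℝ)) := by
        intro x hx
        rcases Finset.mem_insert.mp hx with rfl | hx
        · exact Finset.mem_filter.mpr ⟨hδΔ, hδhull⟩
        · have hx' := Finset.mem_filter.mp hx
          exact Finset.mem_filter.mpr ⟨hx'.1, openHull_mono (Finset.coe_subset.mpr hsub) hx'.2⟩
      have hcards := Finset.card_le_card hins
      rw [Finset.card_insert_of_notMem hδnotmem] at hcards
      omega

namespace PCIM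

variable (P : PCIM)

lemma piece_subset_Icc (i : Fin P.N) : P.piece i ⊆ Set.Icc P.a P.b := by
  obtain ⟨c, d, hcd⟩ := P.piece_interval i
  rw [hcd]; exact Set.inter_subset_right

/-- Between points of two distinct pieces there is a point of `Δ`. -/
lemma delta_between {i j : Fin P.N} (hij : i ≠ j) {x y : ℝ}
    (hx : x ∈ P.piece i) (hy : y ∈ P.piece j) (hxy : x < y) :
    ∃ δ ∈ P.Delta, x < δ ∧ δ < y := by
  set S₀ := P.piece i ∩ Set.Icc x y with hS₀
  have hxS₀ : x ∈ S₀ := ⟨hx, le_refl x, hxy.le⟩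
  have hS₀ne : S₀.Nonempty := ⟨x, hxS₀⟩
  have hbdd : BddAbove S₀ := ⟨y, fun z hz => hz.2.2⟩
  set u := sSup S₀ with hu
  have hxu : x ≤ u := le_csSup hbdd hxS₀
  have huy : u ≤ y := csSup_le hS₀ne (fun z hz => hz.2.2)
  have hxab := P.piece_subset_Icc i hx
  have hyab := P.piece_subset_Icc j hy
  have huab : u ∈ Set.Icc P.a P.b := ⟨le_trans hxab.1 hxu, le_trans huy hyab.2⟩
  have hui : u ∉ P.piece i := by
    intro hu_i
    have hune : u ≠ y := by
      intro h; rw [h] at hu_i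
      exact Set.disjoint_left.mp (P.piece_disjoint i j hij) hu_i hy
    have huy' : u < y := lt_of_le_of_ne huy hune
    obtain ⟨c, d, hcd⟩ := P.piece_interval i
    have hu_i' : u ∈ Set.Ioo c d ∩ Set.Icc P.a P.b := by rw [hcd] at hu_i; exact hu_i
    have hud : u < d := hu_i'.1.2
    have humin : u < min d y := lt_min hud huy'
    set s := (u + min d y) / 2 with hs
    have hs1 : u < s := by rw [hs]; linarith
    have hs2 : s < min d y := by rw [hs]; linarith
    have hsd : s < d := lt_of_lt_of_le hs2 (min_le_left _ _)
    have hsy : s < y := lt_of_lt_of_le hs2 (min_le_right _ _)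
    have hsS₀ : s ∈ S₀ := by
      refine ⟨?_, le_trans hxu hs1.le, hsy.le⟩
      rw [hcd]
      exact ⟨⟨lt_trans hu_i'.1.1 hs1, hsd⟩, le_trans huab.1 hs1.le, le_trans hsy.le hyab.2⟩
    have := le_csSup hbdd hsS₀
    linarith
  have hustar : u ∉ P.Xstar := by
    intro hu_star
    rw [PCIM.Xstar, Set.mem_iUnion] at hu_star
    obtain ⟨k, hu_k⟩ := hu_star
    by_cases hki : k = i
    · exact hui (hki ▸ hu_k)
    · obtain ⟨c', d', hcd'⟩ := P.piece_interval k
      have hu_k' : u ∈ Set.Ioo c' d' ∩ Set.Icc P.a P.b := by rw [hcd'] at hu_k; exact hu_k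
      obtain ⟨s, hsS₀, hcs⟩ := exists_lt_of_lt_csSup hS₀ne hu_k'.1.1
      have hsu : s ≤ u := le_csSup hbdd hsS₀
      have hsk : s ∈ P.piece k := by
        rw [hcd']
        exact ⟨⟨hcs, lt_of_le_of_lt hsu hu_k'.1.2⟩, P.piece_subset_Icc i hsS₀.1⟩
      exact Set.disjoint_left.mp (P.piece_disjoint k i hki) hsk hsS₀.1
  have huΔ : u ∈ P.Delta := ⟨huab, hustar⟩
  refine ⟨u, huΔ, ?_, ?_⟩
  · exact lt_of_le_of_ne hxu (fun h => hui (h ▸ hx))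
  · refine lt_of_le_of_ne huy (fun h => hustar ?_)
    rw [PCIM.Xstar, Set.mem_iUnion]
    exact ⟨j, by rw [h]; exact hy⟩

lemma delta_finite : P.Delta.Finite := by
  have hsub : P.Delta ⊆ ⋃ i, (closure (P.piece i) \ P.piece i) := by
    rintro x ⟨hxX, hxstar⟩
    have hx : x ∈ ⋃ i, closure (P.piece i) := by
      rw [← P.cover]; exact hxX
    rw [Set.mem_iUnion] at hx
    obtain ⟨i, hi⟩ := hx
    exact Set.mem_iUnion.mpr ⟨i, hi, fun h => hxstar (Set.mem_iUnion.mpr ⟨i, h⟩)⟩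
  apply Set.Finite.subset (Set.finite_iUnion ?_) hsub
  intro i
  obtain ⟨c, d, hcd⟩ := P.piece_interval i
  set m := max c P.a with hm
  set M := min d P.b with hMdef
  have h1 : P.piece i ⊆ Set.Icc m M := by
    rw [hcd]; rintro z ⟨⟨hz1, hz2⟩, hz3, hz4⟩
    exact ⟨max_le hz1.le hz3, le_min hz2.le hz4⟩
  have h2 : Set.Ioo m M ⊆ P.piece i := by
    rw [hcd]; rintro z ⟨hz1, hz2⟩
    exact ⟨⟨lt_of_le_of_lt (le_max_left _ _) hz1, lt_of_lt_of_le hz2 (min_le_left _ _)⟩,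
      (le_max_right _ _).trans hz1.le, hz2.le.trans (min_le_right _ _)⟩
  have hcl : closure (P.piece i) ⊆ Set.Icc m M := closure_minimal h1 isClosed_Icc
  apply Set.Finite.subset ((Set.finite_singleton M).insert m)
  intro z hz
  have hz1 := hcl hz.1
  have hz2 : z ∉ Set.Ioo m M := fun h => hz.2 (h2 h)
  simp only [Set.mem_insert_iff, Set.mem_singleton_iff]
  rcases eq_or_lt_of_le hz1.1 with h | h
  · exact Or.inl h.symm
  · rcases eq_or_lt_of_le hz1.2 with h' | h'
    · exact Or.inr h'
    · exact absurd ⟨h, h'⟩ hz2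

/-- `Δ` as a finite set. -/
noncomputable def deltaFin : Finset ℝ := P.delta_finite.toFinset

lemma mem_deltaFin {δ : ℝ} : δ ∈ P.deltaFin ↔ δ ∈ P.Delta := P.delta_finite.mem_toFinset

lemma continuousOn_piece (i : Fin P.N) : ContinuousOn P.f (P.piece i) := by
  have hlip : LipschitzOnWith ⟨P.lam, P.hlam₀.le⟩ P.f (P.piece i) := by
    apply lipschitzOnWith_iff_dist_le_mul.mpr
    intro x hx y hy
    rw [Real.dist_eq, Real.dist_eq]
    exact P.contract i x hx y hy
  exact hlip.continuousOn

lemma piece_ordConnected (i : Fin P.N) : (P.piece i).OrdConnected := by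
  obtain ⟨c, d, hcd⟩ := P.piece_interval i
  rw [hcd]; exact Set.ordConnected_Ioo.inter Set.ordConnected_Icc

lemma closure_image_ordConnected (i : Fin P.N) :
    (closure (P.f '' P.piece i)).OrdConnected := by
  have h1 : IsPreconnected (P.piece i) := (P.piece_ordConnected i).isPreconnected
  have h2 : IsPreconnected (P.f '' P.piece i) := h1.image _ (P.continuousOn_piece i)
  exact h2.closure.ordConnected

/-- The cylinder of the word `w` inside the set `S`. -/
def cyl (S : Set ℝ) (n : ℕ) (w : Fin n → Fin P.N) : Set ℝ :=
  {x | x ∈ S ∧ ∀ j : Fin n, P.f^[(j : ℕ)] x ∈ P.piece (w j)}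

lemma cyl_snoc_subset (S : Set ℝ) (n : ℕ) (v : Fin n → Fin P.N) (i : Fin P.N) :
    P.cyl S (n+1) (Fin.snoc v i) ⊆ P.cyl S n v := by
  rintro x ⟨hxS, hx⟩
  refine ⟨hxS, fun j => ?_⟩
  have h := hx j.castSucc
  rwa [Fin.snoc_castSucc, Fin.coe_castSucc] at h

lemma cyl_snoc_last {S : Set ℝ} {n : ℕ} {v : Fin n → Fin P.N} {i : Fin P.N} {x : ℝ}
    (hx : x ∈ P.cyl S (n+1) (Fin.snoc v i)) : P.f^[n] x ∈ P.piece i := by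
  have h := hx.2 (Fin.last n)
  rwa [Fin.snoc_last, Fin.val_last] at h

/-- The image of the cylinder of `w` under `f^n`. -/
def Tset (S : Set ℝ) (n : ℕ) (w : Fin n → Fin P.N) : Set ℝ := P.f^[n] '' P.cyl S n w

lemma Tset_subset (S : Set ℝ) (n : ℕ) (w : Fin (n+1) → Fin P.N) :
    P.Tset S (n+1) w ⊆ P.f '' (P.Tset S n (Fin.init w) ∩ P.piece (w (Fin.last n))) := by
  have hkey : P.Tset S (n+1) (Fin.snoc (Fin.init w) (w (Fin.last n)))
      ⊆ P.f '' (P.Tset S n (Fin.init w) ∩ P.piece (w (Fin.last n))) := by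
    rintro z ⟨x, hx, rfl⟩
    exact ⟨P.f^[n] x, ⟨⟨x, P.cyl_snoc_subset S n _ _ hx, rfl⟩, P.cyl_snoc_last hx⟩,
      (Function.iterate_succ_apply' _ _ _).symm⟩
  rwa [Fin.snoc_init_self] at hkey

/-- Key lemma: under the separation property, the open hulls of the `f^n`-images of
distinct cylinders of generation `n` are disjoint. -/
lemma keyHull (S : Set ℝ) (hsep : P.SeparationProperty) :
    ∀ (n : ℕ) (w w' : Fin n → Fin P.N), w ≠ w' →
      ∀ z, z ∈ openHull (P.Tset S n w) → z ∈ openHull (P.Tset S n w') → False := by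
  intro n
  induction n with
  | zero =>
    intro w w' hww' _ _ _
    exact hww' (funext fun j => j.elim0)
  | succ n ih =>
    intro w w' hww' z hz hz'
    by_cases hii : w (Fin.last n) = w' (Fin.last n)
    · -- same last letter: contract to generation n
      have hvv' : Fin.init w ≠ Fin.init w' := by
        intro h
        apply hww'
        rw [← Fin.snoc_init_self w, ← Fin.snoc_init_self w', h, hii]
      obtain ⟨⟨p1, hp1, hp1z⟩, ⟨p2, hp2, hzp2⟩⟩ := hz
      obtain ⟨⟨q1, hq1, hq1z⟩, ⟨q2, hq2, hzq2⟩⟩ := hz'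
      obtain ⟨a1, ha1, rfl⟩ := P.Tset_subset S n w hp1
      obtain ⟨a2, ha2, rfl⟩ := P.Tset_subset S n w hp2
      obtain ⟨b1, hb1, rfl⟩ := P.Tset_subset S n w' hq1
      obtain ⟨b2, hb2, rfl⟩ := P.Tset_subset S n w' hq2
      rw [← hii] at hb1 hb2
      rcases hsep.1 (w (Fin.last n)) with hmono | hanti
      · have h12 : a1 < a2 := (hmono.lt_iff_lt ha1.2 ha2.2).mp (lt_trans hp1z hzp2)
        have hb12 : b1 < b2 := (hmono.lt_iff_lt hb1.2 hb2.2).mp (lt_trans hq1z hzq2)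
        have h1b2 : a1 < b2 := (hmono.lt_iff_lt ha1.2 hb2.2).mp (lt_trans hp1z hzq2)
        have hb1a2 : b1 < a2 := (hmono.lt_iff_lt hb1.2 ha2.2).mp (lt_trans hq1z hzp2)
        have hmaxmin : max a1 b1 < min a2 b2 := max_lt (lt_min h12 h1b2) (lt_min hb1a2 hb12)
        set z0 := (max a1 b1 + min a2 b2) / 2 with hz0
        have hz01 : max a1 b1 < z0 := by rw [hz0]; linarith
        have hz02 : z0 < min a2 b2 := by rw [hz0]; linarith
        exact ih (Fin.init w) (Fin.init w') hvv' z0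
          ⟨⟨a1, ha1.1, lt_of_le_of_lt (le_max_left _ _) hz01⟩,
           ⟨a2, ha2.1, lt_of_lt_of_le hz02 (min_le_left _ _)⟩⟩
          ⟨⟨b1, hb1.1, lt_of_le_of_lt (le_max_right _ _) hz01⟩,
           ⟨b2, hb2.1, lt_of_lt_of_le hz02 (min_le_right _ _)⟩⟩
      · have h12 : a2 < a1 := (hanti.lt_iff_gt ha1.2 ha2.2).mp (lt_trans hp1z hzp2)
        have hb12 : b2 < b1 := (hanti.lt_iff_gt hb1.2 hb2.2).mp (lt_trans hq1z hzq2)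
        have h1b2 : b2 < a1 := (hanti.lt_iff_gt ha1.2 hb2.2).mp (lt_trans hp1z hzq2)
        have hb1a2 : a2 < b1 := (hanti.lt_iff_gt hb1.2 ha2.2).mp (lt_trans hq1z hzp2)
        have hmaxmin : max a2 b2 < min a1 b1 := max_lt (lt_min h12 hb1a2) (lt_min h1b2 hb12)
        set z0 := (max a2 b2 + min a1 b1) / 2 with hz0
        have hz01 : max a2 b2 < z0 := by rw [hz0]; linarith
        have hz02 : z0 < min a1 b1 := by rw [hz0]; linarith
        exact ih (Fin.init w) (Fin.init w') hvv' z0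
          ⟨⟨a2, ha2.1, lt_of_le_of_lt (le_max_left _ _) hz01⟩,
           ⟨a1, ha1.1, lt_of_lt_of_le hz02 (min_le_left _ _)⟩⟩
          ⟨⟨b2, hb2.1, lt_of_le_of_lt (le_max_right _ _) hz01⟩,
           ⟨b1, hb1.1, lt_of_lt_of_le hz02 (min_le_right _ _)⟩⟩
    · -- different last letters: use the separation property
      have hsub1 : P.Tset S (n+1) w ⊆ closure (P.f '' P.piece (w (Fin.last n))) :=
        (P.Tset_subset S n w).trans
          ((Set.image_mono Set.inter_subset_right).trans subset_closure)
      have hsub2 : P.Tset S (n+1) w' ⊆ closure (P.f '' P.piece (w' (Fin.last n))) :=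
        (P.Tset_subset S n w').trans
          ((Set.image_mono Set.inter_subset_right).trans subset_closure)
      have h1 := openHull_subset_of_ordConnected hsub1 (P.closure_image_ordConnected _) hz
      have h2 := openHull_subset_of_ordConnected hsub2 (P.closure_image_ordConnected _) hz'
      have hemp := hsep.2 _ _ hii
      have : z ∈ closure (P.f '' P.piece (w (Fin.last n))) ∩
          closure (P.f '' P.piece (w' (Fin.last n))) := ⟨h1, h2⟩
      rw [hemp] at this
      exact this

/-- If every piece indexed by `I` meets `A`, then `I` has at most
`1 +` (number of `Δ` points in the open hull of `A`) elements. -/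
lemma card_pieces_meeting (A : Set ℝ) (I : Finset (Fin P.N))
    (h : ∀ i ∈ I, ∃ t ∈ A, t ∈ P.piece i) :
    I.card ≤ 1 + (P.deltaFin.filter (fun δ => δ ∈ openHull A)).card := by
  set t : Fin P.N → ℝ := fun i => if h' : ∃ t ∈ A, t ∈ P.piece i then h'.choose else 0 with ht
  have htmem : ∀ i ∈ I, t i ∈ A ∧ t i ∈ P.piece i := by
    intro i hi
    have h' := h i hi
    rw [ht]; simp only [dif_pos h']
    exact ⟨h'.choose_spec.1, h'.choose_spec.2⟩
  have hinj : Set.InjOn t I := by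
    intro i hi j hj hij
    by_contra hne
    have h1 : t i ∈ P.piece j := by rw [hij]; exact (htmem j hj).2
    exact Set.disjoint_left.mp (P.piece_disjoint i j hne) (htmem i hi).2 h1
  set T₀ := I.image t with hT₀
  have hcardT₀ : T₀.card = I.card := Finset.card_image_of_injOn hinj
  have hgap : ∀ u ∈ T₀, ∀ v ∈ T₀, u < v → ∃ δ ∈ P.deltaFin, u < δ ∧ δ < v := by
    intro u hu v hv huv
    obtain ⟨iu, hiu, rfl⟩ := Finset.mem_image.mp hu
    obtain ⟨iv, hiv, rfl⟩ := Finset.mem_image.mp hv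
    have hne : iu ≠ iv := fun hh => by subst hh; exact lt_irrefl _ huv
    obtain ⟨δ, hδ, hδ1, hδ2⟩ := P.delta_between hne (htmem iu hiu).2 (htmem iv hiv).2 huv
    exact ⟨δ, P.mem_deltaFin.mpr hδ, hδ1, hδ2⟩
  have hmain := card_le_one_add_gaps P.deltaFin T₀.card T₀ le_rfl hgap
  have hsubA : (T₀ : Set ℝ) ⊆ A := by
    intro z hz
    obtain ⟨iz, hiz, rfl⟩ := Finset.mem_image.mp (Finset.mem_coe.mp hz)
    exact (htmem iz hiz).1
  have hmono : P.deltaFin.filter (fun δ => δ ∈ openHull (T₀ : Set ℝ))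
      ⊆ P.deltaFin.filter (fun δ => δ ∈ openHull A) :=
    Finset.monotone_filter_right _ (fun δ _ hδ => openHull_mono hsubA hδ)
  calc I.card = T₀.card := hcardT₀.symm
    _ ≤ 1 + (P.deltaFin.filter (fun δ => δ ∈ openHull (T₀ : Set ℝ))).card := hmain
    _ ≤ 1 + (P.deltaFin.filter (fun δ => δ ∈ openHull A)).card :=
        Nat.add_le_add_left (Finset.card_le_card hmono) 1

/-- The set of realized words of length `n`. -/
noncomputable def Wn (S : Set ℝ) (n : ℕ) : Finset (Fin n → Fin P.N) :=
  Finset.univ.filter (fun w => (P.cyl S n w).Nonempty)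

lemma Wn_card_step (S : Set ℝ) (hsep : P.SeparationProperty) (n : ℕ) :
    (P.Wn S (n+1)).card ≤ (P.Wn S n).card + P.deltaFin.card := by
  classical
  have hmapsto : ∀ w ∈ P.Wn S (n+1), Fin.init w ∈ P.Wn S n := by
    intro w hw
    obtain ⟨x, hx⟩ := (Finset.mem_filter.mp hw).2
    have hx' : x ∈ P.cyl S (n+1) (Fin.snoc (Fin.init w) (w (Fin.last n))) := by
      rw [Fin.snoc_init_self]; exact hx
    exact Finset.mem_filter.mpr ⟨Finset.mem_univ _, ⟨x, P.cyl_snoc_subset S n _ _ hx'⟩⟩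
  rw [Finset.card_eq_sum_card_fiberwise hmapsto]
  have hfiber : ∀ v ∈ P.Wn S n,
      ((P.Wn S (n+1)).filter (fun w => Fin.init w = v)).card ≤
        1 + (P.deltaFin.filter (fun δ => δ ∈ openHull (P.Tset S n v))).card := by
    intro v _
    have hinj : Set.InjOn (fun w => w (Fin.last n))
        (((P.Wn S (n+1)).filter (fun w => Fin.init w = v)) : Set (Fin (n+1) → Fin P.N)) := by
      intro w1 h1 w2 h2 heq
      have e1 := (Finset.mem_filter.mp (Finset.mem_coe.mp h1)).2
      have e2 := (Finset.mem_filter.mp (Finset.mem_coe.mp h2)).2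
      have heq' : w1 (Fin.last n) = w2 (Fin.last n) := heq
      rw [← Fin.snoc_init_self w1, ← Fin.snoc_init_self w2, e1, e2, heq']
    have hmap : ∀ w ∈ (P.Wn S (n+1)).filter (fun w => Fin.init w = v),
        w (Fin.last n) ∈ Finset.univ.filter
          (fun i => (P.cyl S (n+1) (Fin.snoc v i)).Nonempty) := by
      intro w hw
      have hw1 := Finset.mem_filter.mp hw
      obtain ⟨x, hx⟩ := (Finset.mem_filter.mp hw1.1).2
      refine Finset.mem_filter.mpr ⟨Finset.mem_univ _, ⟨x, ?_⟩⟩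
      rw [← hw1.2, Fin.snoc_init_self]
      exact hx
    have hcard := Finset.card_le_card_of_injOn _ hmap hinj
    have hIb : (Finset.univ.filter
        (fun i => (P.cyl S (n+1) (Fin.snoc v i)).Nonempty)).card ≤
        1 + (P.deltaFin.filter (fun δ => δ ∈ openHull (P.Tset S n v))).card := by
      apply P.card_pieces_meeting
      intro i hi
      obtain ⟨x, hx⟩ := (Finset.mem_filter.mp hi).2
      exact ⟨P.f^[n] x, ⟨x, P.cyl_snoc_subset S n v i hx, rfl⟩, P.cyl_snoc_last hx⟩
    exact le_trans hcard hIb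
  have hdisj : ∀ v ∈ P.Wn S n, ∀ v' ∈ P.Wn S n, v ≠ v' →
      Disjoint (P.deltaFin.filter (fun δ => δ ∈ openHull (P.Tset S n v)))
               (P.deltaFin.filter (fun δ => δ ∈ openHull (P.Tset S n v'))) := by
    intro v _ v' _ hvv'
    rw [Finset.disjoint_left]
    intro δ hδ1 hδ2
    exact P.keyHull S hsep n v v' hvv' δ (Finset.mem_filter.mp hδ1).2 (Finset.mem_filter.mp hδ2).2
  have hsum : ∑ v ∈ P.Wn S n,
      (P.deltaFin.filter (fun δ => δ ∈ openHull (P.Tset S n v))).card ≤ P.deltaFin.card := by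
    rw [← Finset.card_biUnion hdisj]
    exact Finset.card_le_card (Finset.biUnion_subset.mpr (fun v _ => Finset.filter_subset _ _))
  calc ∑ v ∈ P.Wn S n, ((P.Wn S (n+1)).filter (fun w => Fin.init w = v)).card
      ≤ ∑ v ∈ P.Wn S n,
        (1 + (P.deltaFin.filter (fun δ => δ ∈ openHull (P.Tset S n v))).card) :=
        Finset.sum_le_sum hfiber
    _ = (P.Wn S n).card + ∑ v ∈ P.Wn S n,
        (P.deltaFin.filter (fun δ => δ ∈ openHull (P.Tset S n v))).card := by
        rw [Finset.sum_add_distrib, Finset.sum_const, smul_eq_mul, mul_one]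
    _ ≤ (P.Wn S n).card + P.deltaFin.card := Nat.add_le_add_left hsum _

lemma Wn_card (S : Set ℝ) (hsep : P.SeparationProperty) (n : ℕ) :
    (P.Wn S n).card ≤ 1 + n * P.deltaFin.card := by
  induction n with
  | zero =>
    have h1 : (P.Wn S 0).card ≤ Fintype.card (Fin 0 → Fin P.N) := Finset.card_le_univ _
    have h2 : Fintype.card (Fin 0 → Fin P.N) = 1 := by simp
    omega
  | succ n ih =>
    have h1 := P.Wn_card_step S hsep n
    have h2 : 1 + (n+1) * P.deltaFin.card = (1 + n * P.deltaFin.card) + P.deltaFin.card := by ring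
    omega

lemma cyl_dist {S : Set ℝ} {n : ℕ} {w : Fin n → Fin P.N} {x y : ℝ}
    (hx : x ∈ P.cyl S n w) (hy : y ∈ P.cyl S n w) :
    ∀ j, j ≤ n → |P.f^[j] x - P.f^[j] y| ≤ |x - y| := by
  intro j
  induction j with
  | zero => intro _; simp
  | succ j ihj =>
    intro hj
    have hj' : j < n := hj
    have ih := ihj (le_of_lt hj')
    have hxp := hx.2 ⟨j, hj'⟩
    have hyp := hy.2 ⟨j, hj'⟩
    rw [Function.iterate_succ_apply', Function.iterate_succ_apply']
    calc |P.f (P.f^[j] x) - P.f (P.f^[j] y)| ≤ P.lam * |P.f^[j] x - P.f^[j] y| :=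
        P.contract _ _ hxp _ hyp
      _ ≤ 1 * |P.f^[j] x - P.f^[j] y| :=
        mul_le_mul_of_nonneg_right P.hlam₁.le (abs_nonneg _)
      _ = |P.f^[j] x - P.f^[j] y| := one_mul _
      _ ≤ |x - y| := ih

lemma exists_itinerary {x : ℝ} (hx : x ∈ P.Xtilde) (j : ℕ) :
    ∃ i, P.f^[j] x ∈ P.piece i := by
  have h := Set.mem_iInter.mp hx j
  rwa [Set.mem_preimage, PCIM.Xstar, Set.mem_iUnion] at h

/-- The polynomial bound for the spanning cardinality. -/
lemma spanningCard_le (hsep : P.SeparationProperty) {ε : ℝ} (hε : 0 < ε) (n : ℕ) :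
    P.spanningCard n ε ≤ (1 + n * P.deltaFin.card) * (⌈(P.b - P.a) / (ε/2)⌉₊ + 1) := by
  have hε2 : (0:ℝ) < ε/2 := by linarith
  set S := P.Lambda ∩ P.Xtilde with hSdef
  set K := ⌈(P.b - P.a) / (ε/2)⌉₊ + 1 with hK
  set cell : ℕ → Set ℝ := fun k => Set.Ico (P.a + k * (ε/2)) (P.a + (k+1) * (ε/2)) with hcell
  set pick : ((Fin n → Fin P.N) × ℕ) → ℝ := fun p =>
    if h : (P.cyl S n p.1 ∩ cell p.2).Nonempty then h.choose else 0 with hpick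
  set Q : Finset ((Fin n → Fin P.N) × ℕ) :=
    (P.Wn S n ×ˢ Finset.range K).filter (fun p => (P.cyl S n p.1 ∩ cell p.2).Nonempty) with hQ
  set E := Q.image pick with hE
  have hpickmem : ∀ p ∈ Q, pick p ∈ P.cyl S n p.1 ∩ cell p.2 := by
    intro p hp
    have h' := (Finset.mem_filter.mp hp).2
    rw [hpick]; simp only [dif_pos h']
    exact h'.choose_spec
  have hEsub : (E : Set ℝ) ⊆ P.Lambda ∩ P.Xtilde := by
    intro z hz
    obtain ⟨p, hp, rfl⟩ := Finset.mem_image.mp (Finset.mem_coe.mp hz)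
    exact (hpickmem p hp).1.1
  have hspan : ∀ x ∈ P.Lambda ∩ P.Xtilde, ∃ y ∈ E, ∀ j < n, |P.f^[j] x - P.f^[j] y| < ε := by
    intro x hxS
    have hxt : x ∈ P.Xtilde := hxS.2
    set w : Fin n → Fin P.N := fun j => (P.exists_itinerary hxt (j : ℕ)).choose with hw
    have hxcyl : x ∈ P.cyl S n w :=
      ⟨hxS, fun j => (P.exists_itinerary hxt (j : ℕ)).choose_spec⟩
    have hxab : x ∈ Set.Icc P.a P.b := by
      obtain ⟨i, hi⟩ := P.exists_itinerary hxt 0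
      exact P.piece_subset_Icc i (by simpa using hi)
    set k := ⌊(x - P.a) / (ε/2)⌋₊ with hk
    have hknn : (0:ℝ) ≤ (x - P.a) / (ε/2) := div_nonneg (by linarith [hxab.1]) hε2.le
    have hkK : k < K := by
      have h1 : (x - P.a) / (ε/2) ≤ (P.b - P.a) / (ε/2) :=
        (div_le_div_iff_of_pos_right hε2).mpr (by linarith [hxab.2])
      have h2 : k ≤ ⌈(P.b - P.a) / (ε/2)⌉₊ :=
        le_trans (Nat.floor_le_floor h1) (Nat.floor_le_ceil _)
      omega
    have hfl1 : (k : ℝ) * (ε/2) ≤ x - P.a := (le_div_iff₀ hε2).mp (Nat.floor_le hknn)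
    have hfl2 : x - P.a < ((k : ℝ) + 1) * (ε/2) := by
      have := Nat.lt_floor_add_one ((x - P.a) / (ε/2))
      exact (div_lt_iff₀ hε2).mp (by exact_mod_cast this)
    have hxcell : x ∈ cell k := by
      simp only [hcell]
      exact Set.mem_Ico.mpr ⟨by linarith, by linarith⟩
    have hpQ : (w, k) ∈ Q := by
      rw [hQ]
      refine Finset.mem_filter.mpr ⟨Finset.mem_product.mpr ⟨?_, Finset.mem_range.mpr hkK⟩,
        ⟨x, hxcyl, hxcell⟩⟩
      exact Finset.mem_filter.mpr ⟨Finset.mem_univ _, ⟨x, hxcyl⟩⟩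
    have hymem := hpickmem _ hpQ
    refine ⟨pick (w, k), Finset.mem_image.mpr ⟨(w,k), hpQ, rfl⟩, ?_⟩
    intro j hj
    have hycell : pick (w, k) ∈ cell k := hymem.2
    simp only [hcell, Set.mem_Ico] at hycell
    have hxy : |x - pick (w, k)| < ε := by
      rw [abs_sub_lt_iff]
      constructor <;> linarith [hycell.1, hycell.2]
    calc |P.f^[j] x - P.f^[j] (pick (w, k))| ≤ |x - pick (w, k)| :=
        P.cyl_dist hxcyl hymem.1 j (le_of_lt hj)
      _ < ε := hxy
  have hmem : E.card ∈ {m : ℕ | ∃ E' : Finset ℝ, E'.card = m ∧ ↑E' ⊆ P.Lambda ∩ P.Xtilde ∧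
      ∀ x ∈ P.Lambda ∩ P.Xtilde, ∃ y ∈ E', ∀ j < n, |P.f^[j] x - P.f^[j] y| < ε} :=
    ⟨E, rfl, hEsub, hspan⟩
  have h1 : P.spanningCard n ε ≤ E.card := Nat.sInf_le hmem
  have h2 : E.card ≤ (P.Wn S n).card * K := by
    calc E.card ≤ Q.card := Finset.card_image_le
      _ ≤ ((P.Wn S n) ×ˢ Finset.range K).card :=
          Finset.card_le_card (Finset.filter_subset _ _)
      _ = (P.Wn S n).card * K := by rw [Finset.card_product, Finset.card_range]
  have h3 := P.Wn_card S hsep n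
  calc P.spanningCard n ε ≤ E.card := h1
    _ ≤ (P.Wn S n).card * K := h2
    _ ≤ (1 + n * P.deltaFin.card) * K := Nat.mul_le_mul_right _ h3

end PCIM

lemma log_nat_nonneg (m : ℕ) : 0 ≤ Real.log m := by
  rcases Nat.eq_zero_or_pos m with h | h
  · simp [h]
  · exact Real.log_nonneg (by exact_mod_cast h)

lemma tendsto_log_linear_div (C₁ C₂ : ℝ) (hC₁ : 1 ≤ C₁) (hC₂ : 0 ≤ C₂) :
    Filter.Tendsto (fun n : ℕ => Real.log (C₁ + C₂ * n) / n) Filter.atTop (𝓝 0) := by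
  have hlog : Filter.Tendsto (fun n : ℕ => Real.log n / n) Filter.atTop (𝓝 0) :=
    (Real.isLittleO_log_id_atTop.tendsto_div_nhds_zero).comp tendsto_natCast_atTop_atTop
  have hconst : Filter.Tendsto (fun n : ℕ => Real.log (C₁ + C₂) / n) Filter.atTop (𝓝 0) :=
    tendsto_const_nhds.div_atTop tendsto_natCast_atTop_atTop
  have hsum : Filter.Tendsto (fun n : ℕ => Real.log (C₁ + C₂) / n + Real.log n / n)
      Filter.atTop (𝓝 0) := by
    simpa using hconst.add hlog
  apply tendsto_of_tendsto_of_tendsto_of_le_of_le' tendsto_const_nhds hsum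
  · filter_upwards [Filter.eventually_ge_atTop 1] with n hn
    have hn1 : (1:ℝ) ≤ (n:ℝ) := by exact_mod_cast hn
    have h1 : (1:ℝ) ≤ C₁ + C₂ * n := by nlinarith
    exact div_nonneg (Real.log_nonneg h1) (by linarith)
  · filter_upwards [Filter.eventually_ge_atTop 1] with n hn
    have hn1 : (1:ℝ) ≤ (n:ℝ) := by exact_mod_cast hn
    have hnpos : (0:ℝ) < n := by linarith
    have harg : C₁ + C₂ * n ≤ (C₁ + C₂) * n := by nlinarith
    have hpos : (0:ℝ) < C₁ + C₂ * n := by nlinarith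
    have hle : Real.log (C₁ + C₂ * n) ≤ Real.log ((C₁ + C₂) * n) :=
      Real.log_le_log hpos harg
    rw [Real.log_mul (by nlinarith) (by nlinarith)] at hle
    rw [← add_div]
    exact (div_le_div_iff_of_pos_right hnpos).mpr hle

lemma limsup_zero_of_linear_bound (r : ℕ → ℕ) (c₁ c₂ : ℕ) (hc₁ : 1 ≤ c₁)
    (hr : ∀ n, r n ≤ c₁ + c₂ * n) :
    Filter.limsup (fun n : ℕ => Real.log (r n) / (n : ℝ)) Filter.atTop = 0 := by
  apply Filter.Tendsto.limsup_eq
  have hub := tendsto_log_linear_div c₁ c₂ (by exact_mod_cast hc₁) (Nat.cast_nonneg c₂)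
  apply tendsto_of_tendsto_of_tendsto_of_le_of_le' tendsto_const_nhds hub
  · filter_upwards with n
    exact div_nonneg (log_nat_nonneg _) (Nat.cast_nonneg n)
  · filter_upwards [Filter.eventually_ge_atTop 1] with n hn
    have hnpos : (0:ℝ) < (n:ℝ) := by exact_mod_cast hn
    have harg : ((r n : ℕ) : ℝ) ≤ (c₁ : ℝ) + (c₂ : ℝ) * n := by exact_mod_cast hr n
    rcases Nat.eq_zero_or_pos (r n) with h0 | hpos
    · rw [h0]
      simp only [Nat.cast_zero, Real.log_zero, zero_div]
      have h1 : (1:ℝ) ≤ (c₁:ℝ) := by exact_mod_cast hc₁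
      have h2 : (0:ℝ) ≤ (c₂:ℝ) * n := mul_nonneg (Nat.cast_nonneg c₂) hnpos.le
      exact div_nonneg (Real.log_nonneg (by linarith)) hnpos.le
    · have hrpos : (0:ℝ) < ((r n : ℕ) : ℝ) := by exact_mod_cast hpos
      exact (div_le_div_iff_of_pos_right hnpos).mpr (Real.log_le_log hrpos harg)

end EntropyAux

/-- Under the separation property and `D ⊆ X̃`, the topological
entropy of `f` on `Λ ∩ X̃` (Bowen's formula) is zero:
`lim_{ε→0⁺} limsup_{n→∞} log r_n(ε, Λ ∩ X̃) / n = 0`. -/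
theorem topEntropy_attractor_eq_zero (P : PCIM)
    (hsep : P.SeparationProperty) (hD : P.D ⊆ P.Xtilde) :
    Filter.Tendsto
      (fun ε : ℝ => Filter.limsup
        (fun n : ℕ => Real.log (P.spanningCard n ε) / (n : ℝ)) Filter.atTop)
      (𝓝[>] (0 : ℝ)) (𝓝 0) := by
  have hmain : ∀ ε : ℝ, 0 < ε →
      Filter.limsup (fun n : ℕ => Real.log (P.spanningCard n ε) / (n : ℝ)) Filter.atTop = 0 := by
    intro ε hε
    apply limsup_zero_of_linear_bound (fun n => P.spanningCard n ε)
      (⌈(P.b - P.a) / (ε/2)⌉₊ + 1) (P.deltaFin.card * (⌈(P.b - P.a) / (ε/2)⌉₊ + 1))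
      (Nat.le_add_left 1 _)
    intro n
    refine le_trans (P.spanningCard_le hsep hε n) (le_of_eq ?_)
    ring
  have heq : (fun _ : ℝ => (0:ℝ)) =ᶠ[𝓝[>] (0:ℝ)]
      (fun ε : ℝ => Filter.limsup
        (fun n : ℕ => Real.log (P.spanningCard n ε) / (n : ℝ)) Filter.atTop) := by
    filter_upwards [self_mem_nhdsWithin] with ε hε
    exact (hmain ε hε).symm
  exact Filter.Tendsto.congr' heq tendsto_const_nhds
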